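/- For every real number d ∈ (0,1), as K → ∞ along the natural numbers, the product over k from 1 to K of (1+kd)/(2+kd−d) is asymptotically equivalent to (Γ(2/d)/Γ((1+d)/d)) · K^(1−1/d); that is, the ratio of the product to (Γ(2/d)/Γ((1+d)/d))·K^(1−1/d) converges to 1 as K → ∞. -/

import Mathlib

open Real Filter Finset

/-- Asymptotics of the truncation error bound of the power-law representation
of the beta prime process: for `d ∈ (0,1)`, as `K → ∞`,
`∏_{k=1}^{K} (1+kd)/(2+kd-d) ∼ (Γ(2/d)/Γ((1+d)/d)) K^(1-1/d)`. -/
theorem beta_prime_power_law_product_asymptotic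
    (d : ℝ) (hd0 : 0 < d) (hd1 : d < 1) :
    Filter.Tendsto
      (fun K : ℕ =>
        (∏ k ∈ Finset.Icc 1 K, (1 + (k : ℝ) * d) / (2 + (k : ℝ) * d - d)) /
          ((Real.Gamma (2 / d) / Real.Gamma ((1 + d) / d)) *
            (K : ℝ) ^ (1 - 1 / d)))
      Filter.atTop (nhds 1) := by
  set a : ℝ := (1 + d) / d with ha_def
  set b : ℝ := 2 / d with hb_def
  have hd : d ≠ 0 := hd0.ne'
  have ha0 : 0 < a := by positivity
  have hb0 : 0 < b := by positivity
  have hGa : Real.Gamma a ≠ 0 := (Real.Gamma_pos_of_pos ha0).ne'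
  have hGb : Real.Gamma b ≠ 0 := (Real.Gamma_pos_of_pos hb0).ne'
  -- the limit function
  have h1 : Tendsto (fun K : ℕ => Real.GammaSeq b K / Real.GammaSeq a K)
      atTop (nhds (Real.Gamma b / Real.Gamma a)) :=
    (Real.GammaSeq_tendsto_Gamma b).div (Real.GammaSeq_tendsto_Gamma a) hGa
  have h2 : Tendsto (fun K : ℕ =>
      (Real.GammaSeq b K / Real.GammaSeq a K) / (Real.Gamma b / Real.Gamma a))
      atTop (nhds 1) := by
    have := h1.div_const (Real.Gamma b / Real.Gamma a)
    rwa [div_self (div_ne_zero hGb hGa)] at this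
  have h3 : Tendsto (fun K : ℕ => (b + (K : ℝ)) / (a + K)) atTop (nhds 1) := by
    have hr : Tendsto (fun x : ℝ => (b + x) / (a + x)) atTop (nhds 1) := by
      have h4 : Tendsto (fun x : ℝ => (b / x + 1) / (a / x + 1)) atTop (nhds 1) := by
        have hz := tendsto_inv_atTop_zero (𝕜 := ℝ)
        have hb' : Tendsto (fun x : ℝ => b / x + 1) atTop (nhds 1) := by
          simpa using ((hz.const_mul b).add tendsto_const_nhds (b := 1)).congr
            (fun x => by rw [← div_eq_mul_inv])
        have ha' : Tendsto (fun x : ℝ => a / x + 1) atTop (nhds 1) := by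
          simpa using ((hz.const_mul a).add tendsto_const_nhds (b := 1)).congr
            (fun x => by rw [← div_eq_mul_inv])
        simpa [Pi.div_def] using hb'.div ha' one_ne_zero
      refine h4.congr' ?_
      filter_upwards [eventually_gt_atTop 0] with x hx
      field_simp
    exact hr.comp tendsto_natCast_atTop_atTop
  have hlim : Tendsto (fun K : ℕ =>
      ((Real.GammaSeq b K / Real.GammaSeq a K) / (Real.Gamma b / Real.Gamma a)) *
        ((b + (K : ℝ)) / (a + K))) atTop (nhds 1) := by
    simpa using h2.mul h3
  refine hlim.congr' ?_
  filter_upwards [eventually_ge_atTop 1] with K hK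
  have hKpos : (0 : ℝ) < K := by exact_mod_cast hK
  -- rewrite the product
  have hprod : (∏ k ∈ Finset.Icc 1 K, (1 + (k : ℝ) * d) / (2 + (k : ℝ) * d - d))
      = (∏ j ∈ Finset.range K, (a + j)) / (∏ j ∈ Finset.range K, (b + j)) := by
    rw [← Finset.prod_div_distrib]
    rw [← Finset.Ico_add_one_right_eq_Icc, Finset.prod_Ico_eq_prod_range]
    refine Finset.prod_congr (by simp) fun j _ => ?_
    have h1 : 1 + ((1 + j : ℕ) : ℝ) * d = d * (a + j) := by
      rw [ha_def]; push_cast; field_simp; ring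
    have h2 : 2 + ((1 + j : ℕ) : ℝ) * d - d = d * (b + j) := by
      rw [hb_def]; push_cast; field_simp; ring
    rw [h1, h2, mul_div_mul_left _ _ hd]
  have hPa : (0:ℝ) < ∏ j ∈ Finset.range K, (a + j) :=
    Finset.prod_pos fun j _ => by positivity
  have hPb : (0:ℝ) < ∏ j ∈ Finset.range K, (b + j) :=
    Finset.prod_pos fun j _ => by positivity
  have hGSa : Real.GammaSeq a K = (K : ℝ) ^ a * K.factorial /
      ((∏ j ∈ Finset.range K, (a + j)) * (a + K)) := by
    rw [Real.GammaSeq, Finset.prod_range_succ]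
  have hGSb : Real.GammaSeq b K = (K : ℝ) ^ b * K.factorial /
      ((∏ j ∈ Finset.range K, (b + j)) * (b + K)) := by
    rw [Real.GammaSeq, Finset.prod_range_succ]
  have hrpow : (K : ℝ) ^ a = (K : ℝ) ^ b * (K : ℝ) ^ (1 - 1/d) := by
    rw [← Real.rpow_add hKpos]
    congr 1
    rw [ha_def, hb_def]
    field_simp
    ring
  rw [hprod, hGSa, hGSb, hrpow]
  have h5 : (0:ℝ) < (K:ℝ) ^ b := Real.rpow_pos_of_pos hKpos b
  have h6 : (0:ℝ) < (K:ℝ) ^ (1 - 1/d) := Real.rpow_pos_of_pos hKpos _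
  have h7 : (0:ℝ) < (K.factorial : ℝ) := by positivity
  have h8 : (0:ℝ) < a + K := by positivity
  have h9 : (0:ℝ) < b + K := by positivity
  field_simp
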